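/- Let a, b, c ∈ (ZMod N)^k with the standard form of b equal to (1^m, 0^{k-m}) for some m ≤ k. Then the number of S_k-orbits of T([a],[b],[c]) is at most the number of S_{k+1}-orbits of T([a,0],[b,0],[c,0]), where (x,0) denotes appending a zero coordinate. (Level-increasing inequality for orbit structure constants.) -/

import Mathlib

namespace Orbits

/-- Coordinate-permutation action: `(σ • x) i = x (σ⁻¹ i)`. -/
def pact {N k : ℕ} (σ : Equiv.Perm (Fin k)) (x : Fin k → ZMod N) : Fin k → ZMod N :=
  fun i => x (σ⁻¹ i)

/-- `x` and `y` lie in the same `S_k`-orbit. -/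
def SameOrbit {N k : ℕ} (x y : Fin k → ZMod N) : Prop :=
  ∃ σ : Equiv.Perm (Fin k), pact σ x = y

/-- The `S_k`-orbit of `x`. -/
def orbit {N k : ℕ} (x : Fin k → ZMod N) : Set (Fin k → ZMod N) :=
  {y | SameOrbit x y}

abbrev Triple (N k : ℕ) := (Fin k → ZMod N) × (Fin k → ZMod N) × (Fin k → ZMod N)

/-- `T(A,B,C) = {(x,y,z) ∈ A×B×C | x + y = z}`. -/
def T {N k : ℕ} (A B C : Set (Fin k → ZMod N)) : Set (Triple N k) :=
  {p | p.1 ∈ A ∧ p.2.1 ∈ B ∧ p.2.2 ∈ C ∧ p.1 + p.2.1 = p.2.2}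

/-- Diagonal action on triples. -/
def tact {N k : ℕ} (σ : Equiv.Perm (Fin k)) (p : Triple N k) : Triple N k :=
  (pact σ p.1, pact σ p.2.1, pact σ p.2.2)

/-- The number of `S_k`-orbits of a subset of triples (under the diagonal action). -/
noncomputable def numOrbitsOn {N k : ℕ} (S : Set (Triple N k)) : ℕ :=
  Nat.card (Quot (fun p q : S => ∃ σ : Equiv.Perm (Fin k), tact σ (p : Triple N k) = (q : Triple N k)))

/-- Weakly decreasing with respect to the `ZMod.val` ordering (standard form). -/
def StdForm {N k : ℕ} (x : Fin k → ZMod N) : Prop :=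
  ∀ i i' : Fin k, i ≤ i' → (x i').val ≤ (x i).val

/-- The vector `(1^m, 0^{k-m})`. -/
def oneZero (N k m : ℕ) : Fin k → ZMod N :=
  fun i => if (i : ℕ) < m then 1 else 0

/-- The structure constant `M_{[a],[b]}^{[c]}`. -/
noncomputable def M {N k : ℕ} (a b c : Fin k → ZMod N) : ℕ :=
  numOrbitsOn (T (orbit a) (orbit b) (orbit c))

end Orbits

open Orbits

section Aux

open Equiv

variable {N k : ℕ}

theorem Equiv.Perm.apply_inv_self {α : Type*} (f : Perm α) (x : α) : f (f⁻¹ x) = x :=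
  f.apply_symm_apply x

lemma tact_mul (σ τ : Perm (Fin k)) (p : Triple N k) :
    tact σ (tact τ p) = tact (σ * τ) p := by
  unfold tact pact
  simp [funext_iff]

lemma tact_one (p : Triple N k) : tact (1 : Perm (Fin k)) p = p := by
  unfold tact pact
  simp

/-- extend a permutation of `Fin k` to `Fin (k+1)` fixing the last coordinate -/
def extPerm (σ : Perm (Fin k)) : Perm (Fin (k + 1)) :=
  (finSuccEquivLast.symm).permCongr σ.optionCongr

lemma extPerm_castSucc (σ : Perm (Fin k)) (i : Fin k) :
    extPerm σ (Fin.castSucc i) = Fin.castSucc (σ i) := by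
  simp [extPerm, Equiv.permCongr_apply]

lemma extPerm_last (σ : Perm (Fin k)) :
    extPerm σ (Fin.last k) = Fin.last k := by
  simp [extPerm, Equiv.permCongr_apply]

lemma extPerm_inv_castSucc (σ : Perm (Fin k)) (i : Fin k) :
    (extPerm σ)⁻¹ (Fin.castSucc i) = Fin.castSucc (σ⁻¹ i) := by
  apply (extPerm σ).injective
  simp [extPerm_castSucc, Equiv.Perm.apply_inv_self]

lemma extPerm_inv_last (σ : Perm (Fin k)) :
    (extPerm σ)⁻¹ (Fin.last k) = Fin.last k := by
  apply (extPerm σ).injective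
  simp [extPerm_last, Equiv.Perm.apply_inv_self]

lemma pact_extPerm (σ : Perm (Fin k)) (x : Fin k → ZMod N) :
    pact (extPerm σ) (Fin.snoc x (0 : ZMod N)) = Fin.snoc (pact σ x) (0 : ZMod N) := by
  funext i
  refine Fin.lastCases ?_ (fun j => ?_) i
  · simp [pact, extPerm_inv_last]
  · simp [pact, extPerm_inv_castSucc]

lemma snoc_add (x y : Fin k → ZMod N) :
    (Fin.snoc x (0 : ZMod N) : Fin (k + 1) → ZMod N) + Fin.snoc y (0 : ZMod N)
      = Fin.snoc (x + y) (0 : ZMod N) := by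
  funext i
  rcases Fin.lastCases (motive := fun i => i = Fin.last k ∨ ∃ j, i = Fin.castSucc j)
    (Or.inl rfl) (fun j => Or.inr ⟨j, rfl⟩) i with rfl | ⟨j, rfl⟩ <;> simp

/-- if a permutation of `Fin (k+1)` and its effect on snoc vectors fixes the last slot,
it restricts to `Fin k` -/
noncomputable def resPerm (σ : Perm (Fin (k + 1))) : Perm (Fin k) :=
  Equiv.removeNone (finSuccEquivLast.permCongr σ)

lemma resPerm_spec (σ : Perm (Fin (k + 1))) (h : σ (Fin.last k) = Fin.last k) (i : Fin k) :
    σ (Fin.castSucc i) = Fin.castSucc (resPerm σ i) := by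
  have hne : σ (Fin.castSucc i) ≠ Fin.last k := by
    intro hc
    have := σ.injective (hc.trans h.symm)
    exact absurd this (Fin.castSucc_lt_last i).ne
  obtain ⟨j, hj⟩ := Fin.exists_castSucc_eq.mpr hne
  have hsome : (finSuccEquivLast.permCongr σ) (some i) = some j := by
    simp [Equiv.permCongr_apply, ← hj]
  have := Equiv.removeNone_some (finSuccEquivLast.permCongr σ) ⟨j, hsome⟩
  rw [hsome] at this
  have hij : resPerm σ i = j := by
    simpa [resPerm] using this
  rw [hij, hj]

lemma descend (x x' : Fin k → ZMod N) (σ : Perm (Fin (k + 1)))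
    (h : σ (Fin.last k) = Fin.last k)
    (hx : pact σ (Fin.snoc x (0 : ZMod N)) = Fin.snoc x' (0 : ZMod N)) :
    pact (resPerm σ) x = x' := by
  set τ := resPerm σ
  funext i
  have h1 : σ⁻¹ (Fin.castSucc i) = Fin.castSucc (τ⁻¹ i) := by
    apply σ.injective
    rw [Equiv.Perm.apply_inv_self, resPerm_spec σ h, Equiv.Perm.apply_inv_self]
  have h2 : (Fin.snoc x (0 : ZMod N) : Fin (k + 1) → ZMod N) (σ⁻¹ (Fin.castSucc i))
      = (Fin.snoc x' (0 : ZMod N) : Fin (k + 1) → ZMod N) (Fin.castSucc i) :=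
    congrFun hx (Fin.castSucc i)
  rw [h1] at h2
  simpa [pact] using h2

/-- kill the last coordinate of a permutation by composing with a swap -/
lemma fix_last (x y z x' y' z' : Fin k → ZMod N) (σ : Perm (Fin (k + 1)))
    (hx : pact σ (Fin.snoc x (0 : ZMod N)) = Fin.snoc x' (0 : ZMod N))
    (hy : pact σ (Fin.snoc y (0 : ZMod N)) = Fin.snoc y' (0 : ZMod N))
    (hz : pact σ (Fin.snoc z (0 : ZMod N)) = Fin.snoc z' (0 : ZMod N)) :
    ∃ τ : Perm (Fin k), pact τ x = x' ∧ pact τ y = y' ∧ pact τ z = z' := by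
  set p := σ⁻¹ (Fin.last k) with hp
  have key : ∀ v v' : Fin k → ZMod N,
      pact σ (Fin.snoc v (0 : ZMod N)) = Fin.snoc v' (0 : ZMod N) →
      (Fin.snoc v (0 : ZMod N) : Fin (k + 1) → ZMod N) p = (0 : ZMod N) := by
    intro v v' hv
    have := congrFun hv (Fin.last k)
    simpa [pact, ← hp] using this
  set σ' := σ * Equiv.swap p (Fin.last k) with hσ'
  have hlast : σ' (Fin.last k) = Fin.last k := by
    simp only [hσ', Equiv.Perm.mul_apply, Equiv.swap_apply_right]
    exact Equiv.Perm.apply_inv_self σ _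
  have hpact : ∀ v v' : Fin k → ZMod N,
      pact σ (Fin.snoc v (0 : ZMod N)) = Fin.snoc v' (0 : ZMod N) →
      pact σ' (Fin.snoc v (0 : ZMod N)) = Fin.snoc v' (0 : ZMod N) := by
    intro v v' hv
    rw [← hv]
    funext i
    show (Fin.snoc v (0 : ZMod N) : Fin (k + 1) → ZMod N) (σ'⁻¹ i)
      = (Fin.snoc v (0 : ZMod N) : Fin (k + 1) → ZMod N) (σ⁻¹ i)
    have : σ'⁻¹ i = Equiv.swap p (Fin.last k) (σ⁻¹ i) := by
      simp [hσ', mul_inv_rev]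
    rw [this]
    rcases Equiv.swap_apply_def p (Fin.last k) (σ⁻¹ i) with _
    by_cases h1 : σ⁻¹ i = p
    · rw [h1, Equiv.swap_apply_left, Fin.snoc_last, key v v' hv]
    · by_cases h2 : σ⁻¹ i = Fin.last k
      · rw [h2, Equiv.swap_apply_right, Fin.snoc_last, key v v' hv]
      · rw [Equiv.swap_apply_of_ne_of_ne h1 h2]
  exact ⟨resPerm σ', descend x x' σ' hlast (hpact x x' hx),
    descend y y' σ' hlast (hpact y y' hy), descend z z' σ' hlast (hpact z z' hz)⟩

end Aux

theorem stmt7 (N k m : ℕ) (hN : 2 ≤ N) (hk : 0 < k) (hm : m ≤ k)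
    (a b c : Fin k → ZMod N) (hb : b ∈ orbit (oneZero N k m)) :
    M a b c ≤
      M (Fin.snoc a (0 : ZMod N)) (Fin.snoc b (0 : ZMod N)) (Fin.snoc c (0 : ZMod N)) := by
  haveI : NeZero N := ⟨by omega⟩
  set S1 := T (orbit a) (orbit b) (orbit c) with hS1
  set S2 := T (orbit (Fin.snoc a (0 : ZMod N))) (orbit (Fin.snoc b (0 : ZMod N)))
      (orbit (Fin.snoc c (0 : ZMod N))) with hS2
  set r1 : S1 → S1 → Prop :=
    fun p q => ∃ σ : Equiv.Perm (Fin k), tact σ (p : Triple N k) = (q : Triple N k) with hr1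
  set r2 : S2 → S2 → Prop :=
    fun p q => ∃ σ : Equiv.Perm (Fin (k + 1)),
      tact σ (p : Triple N (k + 1)) = (q : Triple N (k + 1)) with hr2
  -- the snoc map on triples
  have hmem : ∀ p : S1, ((Fin.snoc (p : Triple N k).1 (0 : ZMod N),
      Fin.snoc (p : Triple N k).2.1 (0 : ZMod N),
      Fin.snoc (p : Triple N k).2.2 (0 : ZMod N)) : Triple N (k + 1)) ∈ S2 := by
    rintro ⟨⟨x, y, z⟩, ⟨σa, ha⟩, ⟨σb, hbb⟩, ⟨σc, hc⟩, hsum⟩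
    refine ⟨⟨extPerm σa, ?_⟩, ⟨extPerm σb, ?_⟩, ⟨extPerm σc, ?_⟩, ?_⟩
    · rw [pact_extPerm, ha]
    · rw [pact_extPerm, hbb]
    · rw [pact_extPerm, hc]
    · have : (Fin.snoc x (0 : ZMod N) : Fin (k + 1) → ZMod N) + Fin.snoc y (0 : ZMod N)
          = Fin.snoc z (0 : ZMod N) := by
        have hs : x + y = z := hsum
        rw [snoc_add, hs]
      exact this
  set F : S1 → S2 := fun p => ⟨((Fin.snoc (p : Triple N k).1 (0 : ZMod N),
      Fin.snoc (p : Triple N k).2.1 (0 : ZMod N),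
      Fin.snoc (p : Triple N k).2.2 (0 : ZMod N)) : Triple N (k + 1)), hmem p⟩ with hF
  have hequiv : Equivalence r2 := by
    constructor
    · exact fun p => ⟨1, tact_one _⟩
    · rintro p q ⟨σ, hσ⟩
      exact ⟨σ⁻¹, by rw [← hσ, tact_mul, inv_mul_cancel, tact_one]⟩
    · rintro p q s ⟨σ, hσ⟩ ⟨τ, hτ⟩
      exact ⟨τ * σ, by rw [← tact_mul, hσ, hτ]⟩
  -- the quotient map
  have hcompat : ∀ p q : S1, r1 p q → Quot.mk r2 (F p) = Quot.mk r2 (F q) := by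
    rintro ⟨⟨x, y, z⟩, hp⟩ ⟨⟨x', y', z'⟩, hq⟩ ⟨σ, hσ⟩
    apply Quot.sound
    refine ⟨extPerm σ, ?_⟩
    have h1 : pact σ x = x' := congrArg Prod.fst hσ
    have h2 : pact σ y = y' := congrArg (fun w => w.2.1) hσ
    have h3 : pact σ z = z' := congrArg (fun w => w.2.2) hσ
    show (pact (extPerm σ) (Fin.snoc x 0), pact (extPerm σ) (Fin.snoc y 0),
        pact (extPerm σ) (Fin.snoc z 0)) = (Fin.snoc x' 0, Fin.snoc y' 0, Fin.snoc z' 0)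
    rw [pact_extPerm, pact_extPerm, pact_extPerm, h1, h2, h3]
  set g : Quot r1 → Quot r2 := Quot.lift (fun p => Quot.mk r2 (F p)) hcompat with hg
  have ginj : Function.Injective g := by
    intro u v
    induction u using Quot.ind with | _ p =>
    induction v using Quot.ind with | _ q =>
    intro huv
    have hFr : r2 (F p) (F q) :=
      (hequiv.eqvGen_iff).mp (Quot.eqvGen_exact huv)
    obtain ⟨σ, hσ⟩ := hFr
    obtain ⟨⟨x, y, z⟩, hp⟩ := p
    obtain ⟨⟨x', y', z'⟩, hq⟩ := q
    have h1 : pact σ (Fin.snoc x 0) = Fin.snoc x' 0 := congrArg Prod.fst hσ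
    have h2 : pact σ (Fin.snoc y 0) = Fin.snoc y' 0 := congrArg (fun w => w.2.1) hσ
    have h3 : pact σ (Fin.snoc z 0) = Fin.snoc z' 0 := congrArg (fun w => w.2.2) hσ
    obtain ⟨τ, ht1, ht2, ht3⟩ := fix_last x y z x' y' z' σ h1 h2 h3
    apply Quot.sound
    exact ⟨τ, by show (pact τ x, pact τ y, pact τ z) = (x', y', z'); rw [ht1, ht2, ht3]⟩
  haveI : Finite (Quot r2) := Finite.of_surjective (Quot.mk r2) (Quot.mk_surjective)
  exact Nat.card_le_card_of_injective g ginj
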